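/- Let P be a finite set of pairwise distinct keys in {0,1}^256 with |P| ≥ k, fix a key, and let S be the set of the k elements of P with smallest XOR distance to key. Let CPL := min_{p ∈ S} cpl(p, key). Then every p ∈ P with cpl(p, key) ≥ CPL + 1 belongs to S. -/

import Mathlib

/-- The common prefix length of two keys in `{0,1}^n`: the number of leading bits
(indexed from the most significant bit) on which they agree. -/
def cpl {n : ℕ} (x y : BitVec n) : ℕ :=
  ((List.range n).takeWhile (fun i => x.getMsbD i == y.getMsbD i)).length

/-- The XOR distance between two keys: their bitwise XOR interpreted as a natural number. -/
def xorDist {n : ℕ} (x y : BitVec n) : ℕ := (x ^^^ y).toNat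

lemma cpl_le {n : ℕ} (x y : BitVec n) : cpl x y ≤ n := by
  have := (List.takeWhile_prefix (l := List.range n)
    (fun i => x.getMsbD i == y.getMsbD i)).length_le
  simpa [cpl] using this

lemma cpl_eq_of_lt {n : ℕ} (x y : BitVec n) {i : ℕ} (h : i < cpl x y) :
    x.getMsbD i = y.getMsbD i := by
  set p : ℕ → Bool := fun i => x.getMsbD i == y.getMsbD i with hp
  have hpre := (List.takeWhile_prefix (l := List.range n) p)
  have htake : (List.range n).takeWhile p = List.take (cpl x y) (List.range n) := by
    simpa [cpl] using List.prefix_iff_eq_take.mp hpre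
  have hle : cpl x y ≤ n := cpl_le x y
  have hrange : (List.range n).takeWhile p = List.range (cpl x y) := by
    rw [htake, List.take_range, Nat.min_eq_left hle]
  have hi : i ∈ (List.range n).takeWhile p := by
    rw [hrange]; exact List.mem_range.mpr h
  have := List.mem_takeWhile_imp hi
  simpa [p] using this

lemma cpl_ne {n : ℕ} (x y : BitVec n) (h : cpl x y < n) :
    x.getMsbD (cpl x y) ≠ y.getMsbD (cpl x y) := by
  set p : ℕ → Bool := fun i => x.getMsbD i == y.getMsbD i with hp
  have hpre := (List.takeWhile_prefix (l := List.range n) p)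
  have htake : (List.range n).takeWhile p = List.take (cpl x y) (List.range n) := by
    simpa [cpl] using List.prefix_iff_eq_take.mp hpre
  have hdrop : (List.range n).dropWhile p = List.drop (cpl x y) (List.range n) := by
    have h1 : (List.range n).takeWhile p ++ (List.range n).dropWhile p = List.range n :=
      List.takeWhile_append_dropWhile (p := p) (l := List.range n)
    have h2 : List.take (cpl x y) (List.range n) ++ List.drop (cpl x y) (List.range n)
        = List.range n := List.take_append_drop _ _
    have := h1.trans h2.symm
    rw [htake] at this
    exact List.append_cancel_left this
  have hne : (List.range n).dropWhile p ≠ [] := by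
    rw [hdrop]
    simp [List.drop_eq_nil_iff]
    omega
  have hhead := List.head_dropWhile_not p (l := List.range n) hne
  have : ((List.range n).dropWhile p).head hne = cpl x y := by
    rw [List.head_eq_getElem]
    simp only [hdrop]
    rw [List.getElem_drop]
    simp
  rw [this] at hhead
  simpa [p] using hhead

lemma xorDist_lt {n : ℕ} (x y : BitVec n) {m : ℕ} (hm : m ≤ n)
    (h : ∀ i < m, x.getMsbD i = y.getMsbD i) : xorDist x y < 2 ^ (n - m) := by
  rw [xorDist]
  apply Nat.lt_pow_two_of_testBit
  intro i hi
  rw [BitVec.testBit_toNat]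
  rcases Nat.lt_or_ge i n with hin | hin
  · have hj : (x ^^^ y).getLsbD i = (x ^^^ y).getMsbD (n - 1 - i) := by
      rw [BitVec.getMsbD_eq_getLsbD]
      have h1 : n - 1 - (n - 1 - i) = i := by omega
      have h2 : n - 1 - i < n := by omega
      simp [h1, h2]
    rw [hj, BitVec.getMsbD_xor, h _ (by omega)]
    simp
  · exact BitVec.getLsbD_of_ge _ _ hin

lemma xorDist_ge {n : ℕ} (x y : BitVec n) {m : ℕ} (hm : m < n)
    (h : x.getMsbD m ≠ y.getMsbD m) : 2 ^ (n - 1 - m) ≤ xorDist x y := by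
  rw [xorDist]
  apply Nat.ge_two_pow_of_testBit
  rw [BitVec.testBit_toNat]
  have hj : (x ^^^ y).getLsbD (n - 1 - m) = (x ^^^ y).getMsbD m := by
    rw [BitVec.getMsbD_eq_getLsbD]
    simp [hm]
  rw [hj, BitVec.getMsbD_xor]
  revert h
  cases x.getMsbD m <;> cases y.getMsbD m <;> simp

/-- Let `S` be the set of the `k` elements of `P` with smallest XOR distance to `key`
(`S ⊆ P`, `|S| = k`, and every element of `S` is strictly closer to `key` than every
element of `P \ S`), and let `CPL` be the minimum over `p ∈ S` of `cpl(p, key)`.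
Then every `p ∈ P` with `cpl(p, key) ≥ CPL + 1` belongs to `S`. -/
theorem mem_closest_of_cpl_ge (P : Finset (BitVec 256)) (k : ℕ) (hPk : k ≤ P.card)
    (key : BitVec 256) (S : Finset (BitVec 256)) (hSP : S ⊆ P) (hScard : S.card = k)
    (hclosest : ∀ p ∈ S, ∀ q ∈ P, q ∉ S → xorDist p key < xorDist q key)
    (hS : S.Nonempty) (p : BitVec 256) (hp : p ∈ P)
    (hcpl : S.inf' hS (fun q => cpl q key) + 1 ≤ cpl p key) :
    p ∈ S := by
  by_contra hpS
  set c := S.inf' hS (fun q => cpl q key) with hc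
  obtain ⟨q, hqS, hq⟩ := Finset.exists_mem_eq_inf' hS (fun q => cpl q key)
  have hcn : c < 256 := by
    have := cpl_le p key
    omega
  have hlt : xorDist p key < 2 ^ (256 - (c + 1)) := by
    apply xorDist_lt p key (by omega)
    intro i hi
    exact cpl_eq_of_lt p key (by omega)
  have hge : 2 ^ (256 - 1 - c) ≤ xorDist q key := by
    have hq2 : c = cpl q key := hq
    apply xorDist_ge q key hcn
    rw [hq2]
    exact cpl_ne q key (by omega)
  have h1 : xorDist q key < xorDist p key := hclosest q hqS p hp hpS
  rw [show (256:ℕ) - 1 - c = 256 - (c + 1) by omega] at hge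
  omega
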